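/- Every invertible 2×2 complex matrix A with A A*⁻¹ diagonalizable and having two distinct eigenvalues of modulus 1 is congruent (A ↦ TAT* for invertible T) to a diagonal matrix diag(z₁, z₂) with |z₁| = |z₂| = 1. -/

import Mathlib

open Matrix

/-- An invertible 2×2 complex matrix `A` such that `A' = A (A*)⁻¹` is
diagonalizable with two distinct unimodular eigenvalues is congruent to a
diagonal matrix `diag(z₁, z₂)` with `|z₁| = |z₂| = 1`. -/
theorem stmt17 (A : Matrix (Fin 2) (Fin 2) ℂ) (hA : IsUnit A.det)
    (x1 x2 : ℂ) (hne : x1 ≠ x2)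
    (hx1 : ‖x1‖ = 1) (hx2 : ‖x2‖ = 1)
    (P : Matrix (Fin 2) (Fin 2) ℂ) (hP : IsUnit P.det)
    (hdiag : A * (Aᴴ)⁻¹ = P * !![x1, 0; 0, x2] * P⁻¹) :
    ∃ (T : Matrix (Fin 2) (Fin 2) ℂ) (z1 z2 : ℂ), IsUnit T.det ∧
      ‖z1‖ = 1 ∧ ‖z2‖ = 1 ∧
      T * A * Tᴴ = !![z1, 0; 0, z2] := by
  set D : Matrix (Fin 2) (Fin 2) ℂ := !![x1, 0; 0, x2] with hD
  have hAinv : A⁻¹ * A = 1 := A.nonsing_inv_mul hA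
  have hPinv : P⁻¹ * P = 1 := P.nonsing_inv_mul hP
  have hAHinv : (Aᴴ)⁻¹ = A⁻¹ * (P * D * P⁻¹) := by
    calc (Aᴴ)⁻¹ = A⁻¹ * (A * (Aᴴ)⁻¹) := by rw [← mul_assoc, hAinv, one_mul]
    _ = A⁻¹ * (P * D * P⁻¹) := by rw [hdiag]
  set M : Matrix (Fin 2) (Fin 2) ℂ := Pᴴ * A⁻¹ * P * D with hM
  have hMh : Mᴴ = Dᴴ * M := by
    calc Mᴴ = Dᴴ * (Pᴴ * (A⁻¹)ᴴ * P) := by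
          rw [hM]; simp only [Matrix.conjTranspose_mul, Matrix.conjTranspose_conjTranspose,
            Matrix.mul_assoc]
    _ = Dᴴ * (Pᴴ * A⁻¹ * P * D * (P⁻¹ * P)) := by
          rw [Matrix.conjTranspose_nonsing_inv, hAHinv]
          simp only [Matrix.mul_assoc]
    _ = Dᴴ * M := by rw [hPinv, mul_one, hM]
  -- entrywise consequences
  have key01 : starRingEnd ℂ (M 1 0) = starRingEnd ℂ x1 * M 0 1 := by
    have := congrFun (congrFun hMh 0) 1
    simpa [Matrix.mul_apply, Fin.sum_univ_two, hD, Matrix.conjTranspose_apply] using this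
  have key10 : starRingEnd ℂ (M 0 1) = starRingEnd ℂ x2 * M 1 0 := by
    have := congrFun (congrFun hMh 1) 0
    simpa [Matrix.mul_apply, Fin.sum_univ_two, hD, Matrix.conjTranspose_apply] using this
  have hx1c : x1 * starRingEnd ℂ x1 = 1 := by
    rw [Complex.mul_conj]
    norm_cast
    rw [Complex.normSq_eq_norm_sq, hx1]; norm_num
  have hx21 : x2 * starRingEnd ℂ x1 ≠ 1 := by
    intro h
    have : x1 = x2 := by linear_combination x2 * hx1c - x1 * h
    exact hne this
  have e01 : M 0 1 = 0 := by
    have h1 : M 0 1 = x2 * starRingEnd ℂ (M 1 0) := by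
      have := congrArg (starRingEnd ℂ) key10
      simpa [_root_.map_mul, Complex.conj_conj] using this
    rw [key01, ← mul_assoc] at h1
    have h2 : (1 - x2 * starRingEnd ℂ x1) * M 0 1 = 0 := by linear_combination h1
    rcases mul_eq_zero.mp h2 with h | h
    · exact absurd (by linear_combination -h : x2 * starRingEnd ℂ x1 = 1) hx21
    · exact h
  have e10 : M 1 0 = 0 := by
    rw [e01, mul_zero] at key01
    simpa using congrArg (starRingEnd ℂ) key01
  -- M is invertible, so the diagonal entries are nonzero
  have hDdet : D.det = x1 * x2 := by simp [hD, Matrix.det_fin_two_of]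
  have hx1ne : x1 ≠ 0 := by intro h; rw [h] at hx1; simp at hx1
  have hx2ne : x2 ≠ 0 := by intro h; rw [h] at hx2; simp at hx2
  have hMdet : M.det ≠ 0 := by
    rw [hM, Matrix.det_mul, Matrix.det_mul, Matrix.det_mul, hDdet,
      Matrix.det_conjTranspose, Matrix.det_nonsing_inv, Ring.inverse_eq_inv']
    exact mul_ne_zero (mul_ne_zero (mul_ne_zero (star_ne_zero.mpr hP.ne_zero)
      (inv_ne_zero hA.ne_zero)) hP.ne_zero) (mul_ne_zero hx1ne hx2ne)
  have hdet2 : M.det = M 0 0 * M 1 1 := by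
    rw [Matrix.det_fin_two, e01, e10]; ring
  have hd0 : M 0 0 ≠ 0 := fun h => hMdet (by rw [hdet2, h, zero_mul])
  have hd1 : M 1 1 ≠ 0 := fun h => hMdet (by rw [hdet2, h, mul_zero])
  set d0 : ℂ := M 0 0 with hd0'
  set d1 : ℂ := M 1 1 with hd1'
  have hMeq : M = !![d0, 0; 0, d1] := by
    rw [Matrix.eta_fin_two M, e01, e10]
  -- build T
  set c0 : ℝ := (Real.sqrt (‖d0‖))⁻¹ with hc0
  set c1 : ℝ := (Real.sqrt (‖d1‖))⁻¹ with hc1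
  have habs0 : ‖d0‖ > 0 := norm_pos_iff.mpr hd0
  have habs1 : ‖d1‖ > 0 := norm_pos_iff.mpr hd1
  have hc0pos : c0 > 0 := by positivity
  have hc1pos : c1 > 0 := by positivity
  have hc0sq : (c0 : ℂ) * c0 = (((‖d0‖)⁻¹ : ℝ) : ℂ) := by
    rw [← Complex.ofReal_mul]
    congr 1
    rw [hc0, ← mul_inv, Real.mul_self_sqrt habs0.le]
  have hc1sq : (c1 : ℂ) * c1 = (((‖d1‖)⁻¹ : ℝ) : ℂ) := by
    rw [← Complex.ofReal_mul]
    congr 1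
    rw [hc1, ← mul_inv, Real.mul_self_sqrt habs1.le]
  push_cast at hc0sq hc1sq
  set C : Matrix (Fin 2) (Fin 2) ℂ := !![(c0 : ℂ), 0; 0, (c1 : ℂ)] with hC
  have hCH : Cᴴ = C := by
    rw [hC]
    ext i j
    fin_cases i <;> fin_cases j <;>
      simp [Matrix.conjTranspose_apply, Complex.conj_ofReal]
  refine ⟨C * (Pᴴ * A⁻¹), d0 * ((‖d0‖)⁻¹ : ℝ), d1 * ((‖d1‖)⁻¹ : ℝ),
    ?_, ?_, ?_, ?_⟩
  · rw [Matrix.det_mul, Matrix.det_mul, Matrix.det_conjTranspose, Matrix.det_nonsing_inv,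
      Ring.inverse_eq_inv']
    apply isUnit_iff_ne_zero.mpr
    have hCdet : C.det = (c0 : ℂ) * c1 := by simp [hC, Matrix.det_fin_two_of]
    rw [hCdet]
    exact mul_ne_zero (mul_ne_zero (Complex.ofReal_ne_zero.mpr hc0pos.ne')
      (Complex.ofReal_ne_zero.mpr hc1pos.ne'))
      (mul_ne_zero (star_ne_zero.mpr hP.ne_zero) (inv_ne_zero hA.ne_zero))
  · rw [norm_mul, Complex.norm_real, Real.norm_eq_abs, abs_of_pos (inv_pos.mpr habs0)]
    field_simp
  · rw [norm_mul, Complex.norm_real, Real.norm_eq_abs, abs_of_pos (inv_pos.mpr habs1)]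
    field_simp
  · have hmid : C * (Pᴴ * A⁻¹) * A * (C * (Pᴴ * A⁻¹))ᴴ = C * M * Cᴴ := by
      have h1 : (C * (Pᴴ * A⁻¹))ᴴ = (Aᴴ)⁻¹ * P * Cᴴ := by
        simp only [Matrix.conjTranspose_mul, Matrix.conjTranspose_conjTranspose,
          Matrix.conjTranspose_nonsing_inv, Matrix.mul_assoc]
      have hAinv2 : A * A⁻¹ = 1 := A.mul_nonsing_inv hA
      rw [h1, hAHinv, hM]
      calc C * (Pᴴ * A⁻¹) * A * (A⁻¹ * (P * D * P⁻¹) * P * Cᴴ)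
          = C * (Pᴴ * (A⁻¹ * ((A * A⁻¹) * (P * (D * ((P⁻¹ * P) * Cᴴ)))))) := by
            simp only [Matrix.mul_assoc]
        _ = C * (Pᴴ * A⁻¹ * P * D) * Cᴴ := by
            rw [hAinv2, hPinv, one_mul, one_mul]
            simp only [Matrix.mul_assoc]
    rw [hmid, hCH, hMeq, hC, Matrix.mul_fin_two, Matrix.mul_fin_two]
    ext i j
    fin_cases i <;> fin_cases j <;> simp
    · linear_combination d0 * hc0sq
    · linear_combination d1 * hc1sq
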